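/- If some principal minor of an n×n matrix M (over a field K of characteristic zero) vanishes and n > 1, then the quotient ring K[y_1,...,y_n]/I_M is infinite-dimensional over K: there exists a linear form L such that the powers L^k are linearly independent modulo I_M. -/

import Mathlib

open MvPolynomial

/-- If some principal minor of `M` vanishes and `n > 1`, the quotient `K[y]/I_M` is
infinite-dimensional: there is a linear form `L` whose powers `L^k` (k ≥ 1) are
linearly independent modulo `I_M`. -/
theorem quotient_infinite_dimensional_of_principal_minor_eq_zero
    {K : Type*} [Field K] [CharZero K] {n : ℕ} (hn : 1 < n)
    (M : Matrix (Fin n) (Fin n) K)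
    (hmin : ∃ J : Finset (Fin n), J.Nonempty ∧
      (M.submatrix (Subtype.val : {x // x ∈ J} → Fin n) Subtype.val).det = 0) :
    ¬ Module.Finite K
        (MvPolynomial (Fin n) K ⧸
          (Ideal.span (Set.range fun i : Fin n => X i * ∑ j, C (M i j) * X j) :
            Ideal (MvPolynomial (Fin n) K))) ∧
    ∃ c : Fin n → K,
      LinearIndependent K (fun k : ℕ =>
        Ideal.Quotient.mk
          (Ideal.span (Set.range fun i : Fin n => X i * ∑ j, C (M i j) * X j))
          ((∑ j, C (c j) * X j) ^ (k + 1))) := by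
  classical
  obtain ⟨J, hJne, hdet⟩ := hmin
  obtain ⟨w, hw0, hwv⟩ := Matrix.exists_mulVec_eq_zero_iff.mpr hdet
  set I : Ideal (MvPolynomial (Fin n) K) :=
    Ideal.span (Set.range fun i : Fin n => X i * ∑ j, C (M i j) * X j) with hI
  -- the kernel vector, extended by zero
  set c : Fin n → K := fun i => if h : i ∈ J then w ⟨i, h⟩ else 0 with hc
  have hkey : ∀ i : Fin n, c i * ∑ j, M i j * c j = 0 := by
    intro i
    by_cases hi : i ∈ J
    · have hsum : ∑ j, M i j * c j = 0 := by
        have h1 : ∑ j, M i j * c j = ∑ j ∈ J, M i j * c j := by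
          symm
          apply Finset.sum_subset (Finset.subset_univ J)
          intro x _ hx
          simp [hc, hx]
        have h2 : ∑ j ∈ J, M i j * c j
            = (M.submatrix (Subtype.val : {x // x ∈ J} → Fin n) Subtype.val).mulVec w
              ⟨i, hi⟩ := by
          rw [Matrix.mulVec, dotProduct, ← Finset.sum_coe_sort J]
          refine Finset.sum_congr rfl fun j _ => ?_
          simp [hc, j.2, Matrix.submatrix]
        rw [h1, h2, hwv]
        rfl
      rw [hsum, mul_zero]
    · simp [hc, hi]
  -- a coordinate where the kernel vector is nonzero
  obtain ⟨j0', hj0'⟩ := Function.ne_iff.mp hw0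
  have hcj0 : c j0'.1 ≠ 0 := by
    simpa [hc, j0'.2] using hj0'
  set j0 : Fin n := j0'.1
  -- the algebra map to K[t]
  set c' : Fin n → K := Pi.single j0 (1 : K) with hc'
  set φ : MvPolynomial (Fin n) K →ₐ[K] Polynomial K :=
    aeval (fun j => Polynomial.C (c j) * Polynomial.X) with hφ
  have hφgen : ∀ i : Fin n, φ (X i * ∑ j, C (M i j) * X j) = 0 := by
    intro i
    have hs : φ (∑ j, C (M i j) * X j)
        = Polynomial.C (∑ j, M i j * c j) * Polynomial.X := by
      rw [hφ, map_sum, map_sum Polynomial.C, Finset.sum_mul]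
      refine Finset.sum_congr rfl fun j _ => ?_
      simp only [map_mul, aeval_X, aeval_C, Polynomial.algebraMap_eq, Polynomial.C_mul]
      ring
    rw [map_mul, hs, hφ, aeval_X]
    have : Polynomial.C (c i) * Polynomial.X
        * (Polynomial.C (∑ j, M i j * c j) * Polynomial.X)
        = Polynomial.C (c i * ∑ j, M i j * c j) * (Polynomial.X * Polynomial.X) := by
      rw [Polynomial.C_mul]; ring
    rw [this, hkey i, Polynomial.C_0, zero_mul]
  have hmem : ∀ a ∈ I, φ a = 0 := by
    intro a ha
    have hle : I ≤ RingHom.ker (φ : MvPolynomial (Fin n) K →+* Polynomial K) := by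
      rw [hI, Ideal.span_le]
      rintro _ ⟨i, rfl⟩
      simpa [RingHom.mem_ker] using hφgen i
    exact hle ha
  -- the induced map on the quotient
  set Φ : (MvPolynomial (Fin n) K ⧸ I) →ₐ[K] Polynomial K :=
    Ideal.Quotient.liftₐ I φ hmem with hΦ
  have hΦmk : ∀ p, Φ (Ideal.Quotient.mk I p) = φ p := fun p => rfl
  -- the linear form is X j0
  have hL : (∑ j, C (c' j) * X j) = (X j0 : MvPolynomial (Fin n) K) := by
    rw [Finset.sum_eq_single j0]
    · simp [hc']
    · intro b _ hb
      simp [hc', Pi.single_eq_of_ne hb]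
    · simp [hc']
  -- linear independence of the image family
  have hbase : LinearIndependent K (fun k : ℕ => (Polynomial.monomial (k + 1) (1 : K))) := by
    have h := (Polynomial.basisMonomials K).linearIndependent
    have hinj : Function.Injective (fun k : ℕ => k + 1) := fun a b hab => by
      simpa using hab
    have := h.comp (fun k : ℕ => k + 1) hinj
    simpa [Polynomial.coe_basisMonomials, Function.comp_def] using this
  have hunits : LinearIndependent K
      (fun k : ℕ => (c j0 ^ (k + 1)) • (Polynomial.monomial (k + 1) (1 : K))) := by
    have := hbase.units_smul (fun k : ℕ => Units.mk0 (c j0 ^ (k + 1)) (pow_ne_zero _ hcj0))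
    exact this
  have hli : LinearIndependent K (fun k : ℕ =>
      Ideal.Quotient.mk I ((∑ j, C (c' j) * X j) ^ (k + 1))) := by
    apply LinearIndependent.of_comp Φ.toLinearMap
    have heq : (⇑Φ.toLinearMap ∘ fun k : ℕ =>
        Ideal.Quotient.mk I ((∑ j, C (c' j) * X j) ^ (k + 1)))
        = fun k : ℕ => (c j0 ^ (k + 1)) • (Polynomial.monomial (k + 1) (1 : K)) := by
      funext k
      simp only [Function.comp_apply]
      have : Φ.toLinearMap (Ideal.Quotient.mk I ((X j0 : MvPolynomial (Fin n) K) ^ (k + 1)))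
          = (Polynomial.C (c j0) * Polynomial.X) ^ (k + 1) := by
        simp only [AlgHom.toLinearMap_apply]
        rw [hΦmk, hφ, map_pow, aeval_X]
      rw [hL, this, mul_pow, ← Polynomial.C_pow, Polynomial.C_mul_X_pow_eq_monomial]
      simp [Polynomial.smul_monomial]
    rw [heq]
    exact hunits
  refine ⟨?_, ⟨c', hli⟩⟩
  intro hfin
  exact Module.Finite.not_linearIndependent_of_infinite _ hli
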